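/- As n → ∞, the sum ∑ 1/((r+s)(r+ℓ+s)), taken over all integers k₁ ≥ 1, r ≥ 1, ℓ ≥ 1, s ≥ 1 with k₁ + r + ℓ + s ≤ n, is asymptotically equivalent to n²/2. -/

import Mathlib

open Filter Finset

lemma stage1 (n : ℕ) :
    (∑ p ∈ (Finset.Icc 1 n ×ˢ Finset.Icc 1 n ×ˢ
        Finset.Icc 1 n ×ˢ Finset.Icc 1 n).filter
        (fun p : ℕ × ℕ × ℕ × ℕ => p.1 + p.2.1 + p.2.2.1 + p.2.2.2 ≤ n),
      1 / (((p.2.1 : ℝ) + p.2.2.2) * ((p.2.1 : ℝ) + p.2.2.1 + p.2.2.2)))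
    = ∑ q ∈ (Finset.Icc 1 n ×ˢ Finset.Icc 1 n ×ˢ
        Finset.Icc 1 n ×ˢ Finset.Icc 1 n).filter
        (fun q : ℕ × ℕ × ℕ × ℕ => q.2.2.1 < q.1 ∧ q.1 < q.2.1 ∧ q.2.2.2 + q.2.1 ≤ n),
      1 / ((q.1 : ℝ) * q.2.1) := by
  refine Finset.sum_nbij'
    (fun p => (p.2.1 + p.2.2.2, p.2.1 + p.2.2.1 + p.2.2.2, p.2.1, p.1))
    (fun q => (q.2.2.2, q.2.2.1, q.2.1 - q.1, q.1 - q.2.2.1)) ?_ ?_ ?_ ?_ ?_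
  · rintro ⟨k, r, l, s⟩ hp
    simp only [Finset.mem_filter, Finset.mem_product, Finset.mem_Icc] at hp ⊢
    omega
  · rintro ⟨a, b, r, k⟩ hq
    simp only [Finset.mem_filter, Finset.mem_product, Finset.mem_Icc] at hq ⊢
    omega
  · rintro ⟨k, r, l, s⟩ hp
    simp only [Finset.mem_filter, Finset.mem_product, Finset.mem_Icc] at hp
    simp only [Prod.mk.injEq, true_and, and_true]
    omega
  · rintro ⟨a, b, r, k⟩ hq
    simp only [Finset.mem_filter, Finset.mem_product, Finset.mem_Icc] at hq
    simp only [Prod.mk.injEq, true_and, and_true]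
    omega
  · rintro ⟨k, r, l, s⟩ hp
    simp only
    push_cast
    ring


lemma count_k (n b : ℕ) (c : ℝ) :
    ∑ k ∈ Finset.Icc 1 n, (if k + b ≤ n then c else 0) = ((n - b : ℕ) : ℝ) * c := by
  rw [← Finset.sum_filter]
  have h : (Finset.Icc 1 n).filter (fun k => k + b ≤ n) = Finset.Icc 1 (n - b) := by
    ext k; simp only [Finset.mem_filter, Finset.mem_Icc]; omega
  rw [h, Finset.sum_const, Nat.card_Icc]
  simp [nsmul_eq_mul]

lemma count_r (n a : ℕ) (c : ℝ) :
    ∑ r ∈ Finset.Icc 1 n, (if r < a ∧ a ≤ n then c else 0) = (if a ≤ n then ((a - 1 : ℕ) : ℝ) * c else 0) := by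
  by_cases ha : a ≤ n
  · simp only [ha, and_true, if_true]
    rw [← Finset.sum_filter]
    have h : (Finset.Icc 1 n).filter (fun r => r < a) = Finset.Icc 1 (a - 1) := by
      ext r; simp only [Finset.mem_filter, Finset.mem_Icc]; omega
    rw [h, Finset.sum_const, Nat.card_Icc]
    simp [nsmul_eq_mul]
  · simp [ha]

lemma stage2 (n : ℕ) :
    (∑ q ∈ (Finset.Icc 1 n ×ˢ Finset.Icc 1 n ×ˢ
        Finset.Icc 1 n ×ˢ Finset.Icc 1 n).filter
        (fun q : ℕ × ℕ × ℕ × ℕ => q.2.2.1 < q.1 ∧ q.1 < q.2.1 ∧ q.2.2.2 + q.2.1 ≤ n),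
      1 / ((q.1 : ℝ) * q.2.1))
    = ∑ b ∈ Finset.Icc 1 n, ∑ a ∈ Finset.Icc 1 n,
        (if a < b then ((a - 1 : ℕ) : ℝ) * ((n - b : ℕ) : ℝ) / (a * b) else 0) := by
  rw [Finset.sum_filter, Finset.sum_product]
  simp only [Finset.sum_product]
  rw [Finset.sum_comm]
  refine Finset.sum_congr rfl fun b hb => ?_
  refine Finset.sum_congr rfl fun a ha => ?_
  rw [Finset.mem_Icc] at ha hb
  have key : ∀ r k : ℕ, (if r < a ∧ a < b ∧ k + b ≤ n then 1 / ((a : ℝ) * b) else 0)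
      = if r < a ∧ a ≤ n then (if a < b then (if k + b ≤ n then 1 / ((a : ℝ) * b) else 0) else 0) else 0 := by
    intro r k
    by_cases h1 : r < a <;> by_cases h2 : a < b <;> by_cases h3 : k + b ≤ n <;>
      simp [h1, h2, h3, ha.2]
  simp only [key]
  by_cases hab : a < b
  · simp only [hab, if_true]
    have : ∀ r : ℕ, (if r < a ∧ a ≤ n then
        (∑ k ∈ Finset.Icc 1 n, if k + b ≤ n then 1 / ((a : ℝ) * b) else 0) else 0)
        = if r < a ∧ a ≤ n then (((n - b : ℕ) : ℝ) * (1 / ((a : ℝ) * b))) else 0 := by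
      intro r; rw [count_k]
    calc ∑ r ∈ Finset.Icc 1 n, ∑ k ∈ Finset.Icc 1 n,
          (if r < a ∧ a ≤ n then (if k + b ≤ n then 1 / ((a : ℝ) * b) else 0) else 0)
        = ∑ r ∈ Finset.Icc 1 n, (if r < a ∧ a ≤ n then
            (((n - b : ℕ) : ℝ) * (1 / ((a : ℝ) * b))) else 0) := by
          refine Finset.sum_congr rfl fun r _ => ?_
          by_cases h : r < a ∧ a ≤ n
          · simp only [if_pos h]; rw [count_k]
          · simp only [if_neg h, Finset.sum_const_zero]
      _ = ((a - 1 : ℕ) : ℝ) * ((n - b : ℕ) : ℝ) / (a * b) := by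
          rw [count_r]
          simp only [ha.2, if_true]
          ring
  · simp [hab]


lemma Hsum_eq (m : ℕ) : ∑ a ∈ Finset.Icc 1 m, 1/(a:ℝ) = (harmonic m : ℝ) := by
  rw [harmonic_eq_sum_Icc]
  push_cast
  simp [one_div]

lemma Hsum_nonneg (m : ℕ) : 0 ≤ ∑ a ∈ Finset.Icc 1 m, 1/(a:ℝ) :=
  Finset.sum_nonneg fun a _ => by positivity

lemma Hsum_le (n m : ℕ) (h : m ≤ n) : ∑ a ∈ Finset.Icc 1 m, 1/(a:ℝ) ≤ 1 + Real.log n := by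
  calc ∑ a ∈ Finset.Icc 1 m, 1/(a:ℝ) ≤ ∑ a ∈ Finset.Icc 1 n, 1/(a:ℝ) := by
        refine Finset.sum_le_sum_of_subset_of_nonneg (Finset.Icc_subset_Icc_right h)
          fun a _ _ => by positivity
    _ = (harmonic n : ℝ) := Hsum_eq n
    _ ≤ 1 + Real.log n := harmonic_le_one_add_log n

lemma inner_eq (n b : ℕ) (hb1 : 1 ≤ b) (hb2 : b ≤ n) :
    ∑ a ∈ Finset.Icc 1 n, (if a < b then ((a-1:ℕ):ℝ)*((n-b:ℕ):ℝ)/(a*b) else 0)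
    = ((n-b:ℕ):ℝ)/b * (((b-1:ℕ):ℝ) - ∑ a ∈ Finset.Icc 1 (b-1), 1/(a:ℝ)) := by
  rw [← Finset.sum_filter]
  have h : (Finset.Icc 1 n).filter (fun a => a < b) = Finset.Icc 1 (b-1) := by
    ext a; simp only [Finset.mem_filter, Finset.mem_Icc]; omega
  rw [h]
  have : ∀ a ∈ Finset.Icc 1 (b-1), ((a-1:ℕ):ℝ)*((n-b:ℕ):ℝ)/(a*b)
      = ((n-b:ℕ):ℝ)/b * (1 - 1/(a:ℝ)) := by
    intro a ha
    rw [Finset.mem_Icc] at ha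
    have ha0 : (a:ℝ) ≠ 0 := Nat.cast_ne_zero.2 (by omega)
    have hb0 : (b:ℝ) ≠ 0 := Nat.cast_ne_zero.2 (by omega)
    have : ((a-1:ℕ):ℝ) = (a:ℝ) - 1 := by
      rw [Nat.cast_sub ha.1]; norm_num
    rw [this]
    field_simp
  rw [Finset.sum_congr rfl this, ← Finset.mul_sum, Finset.sum_sub_distrib,
    Finset.sum_const, Nat.card_Icc]
  simp [nsmul_eq_mul]

lemma gauss (n : ℕ) : ∑ b ∈ Finset.Icc 1 n, ((n-b:ℕ):ℝ) = (n:ℝ)*((n:ℝ)-1)/2 := by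
  rcases Nat.eq_zero_or_pos n with h | h
  · subst h; simp
  have h2 : ∑ b ∈ Finset.Icc 1 n, (n-b) = ∑ i ∈ Finset.range n, i := by
    rw [← Finset.Ico_add_one_right_eq_Icc, Finset.sum_Ico_eq_sum_range]
    calc ∑ i ∈ Finset.range n, (n - (1 + i)) = ∑ i ∈ Finset.range n, (n - 1 - i) := by
          refine Finset.sum_congr rfl fun i _ => by omega
      _ = ∑ i ∈ Finset.range n, i := by
          simpa using Finset.sum_range_reflect (fun i => i) n
  have h3 : (∑ b ∈ Finset.Icc 1 n, (n-b)) * 2 = n * (n-1) := by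
    rw [h2, Finset.sum_range_id_mul_two]
  have h4 := congrArg (fun k : ℕ => (k:ℝ)) h3
  simp only [Nat.cast_mul, Nat.cast_sum, Nat.cast_sub h, Nat.cast_ofNat, Nat.cast_one] at h4
  linarith

lemma upper_bound (n : ℕ) :
    ∑ b ∈ Finset.Icc 1 n, ((n-b:ℕ):ℝ)/b * (((b-1:ℕ):ℝ) - ∑ a ∈ Finset.Icc 1 (b-1), 1/(a:ℝ))
      ≤ (n:ℝ)*((n:ℝ)-1)/2 := by
  rw [← gauss]
  refine Finset.sum_le_sum fun b hb => ?_
  rw [Finset.mem_Icc] at hb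
  have hb0 : (0:ℝ) < b := by exact_mod_cast hb.1
  have hH : 0 ≤ ∑ a ∈ Finset.Icc 1 (b-1), 1/(a:ℝ) :=
    Finset.sum_nonneg fun a _ => by positivity
  have hy : ((b-1:ℕ):ℝ) - ∑ a ∈ Finset.Icc 1 (b-1), 1/(a:ℝ) ≤ (b:ℝ) := by
    have : ((b-1:ℕ):ℝ) ≤ (b:ℝ) := by exact_mod_cast Nat.sub_le b 1
    linarith
  calc ((n-b:ℕ):ℝ)/b * (((b-1:ℕ):ℝ) - ∑ a ∈ Finset.Icc 1 (b-1), 1/(a:ℝ))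
      ≤ ((n-b:ℕ):ℝ)/b * b := by
        refine mul_le_mul_of_nonneg_left hy (by positivity)
    _ = ((n-b:ℕ):ℝ) := div_mul_cancel₀ _ hb0.ne'

lemma lower_bound (n : ℕ) (hn : 1 ≤ n) :
    (n:ℝ)*((n:ℝ)-1)/2 - (2 + Real.log n)*n*(1+Real.log n)
      ≤ ∑ b ∈ Finset.Icc 1 n, ((n-b:ℕ):ℝ)/b * (((b-1:ℕ):ℝ) - ∑ a ∈ Finset.Icc 1 (b-1), 1/(a:ℝ)) := by
  have hlog : 0 ≤ Real.log n := Real.log_nonneg (by exact_mod_cast hn)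
  have key : ∀ b ∈ Finset.Icc 1 n,
      ((n-b:ℕ):ℝ) - (2+Real.log n)*((n:ℝ)/b)
        ≤ ((n-b:ℕ):ℝ)/b * (((b-1:ℕ):ℝ) - ∑ a ∈ Finset.Icc 1 (b-1), 1/(a:ℝ)) := by
    intro b hb
    rw [Finset.mem_Icc] at hb
    have hb0 : (0:ℝ) < b := by exact_mod_cast hb.1
    have hx : ((n-b:ℕ):ℝ) ≤ (n:ℝ) := by exact_mod_cast Nat.sub_le n b
    have hx0 : (0:ℝ) ≤ ((n-b:ℕ):ℝ) := by positivity
    have hH : ∑ a ∈ Finset.Icc 1 (b-1), 1/(a:ℝ) ≤ 1 + Real.log n :=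
      Hsum_le n (b-1) (by omega)
    have hy : (b:ℝ) - (2+Real.log n) ≤ ((b-1:ℕ):ℝ) - ∑ a ∈ Finset.Icc 1 (b-1), 1/(a:ℝ) := by
      have : ((b-1:ℕ):ℝ) = (b:ℝ) - 1 := by
        rw [Nat.cast_sub hb.1]; norm_num
      rw [this]; linarith
    calc ((n-b:ℕ):ℝ) - (2+Real.log n)*((n:ℝ)/b)
        ≤ ((n-b:ℕ):ℝ) - (2+Real.log n)*(((n-b:ℕ):ℝ)/b) := by
          gcongr
        _ = ((n-b:ℕ):ℝ)/b * ((b:ℝ) - (2+Real.log n)) := by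
          field_simp
        _ ≤ ((n-b:ℕ):ℝ)/b * (((b-1:ℕ):ℝ) - ∑ a ∈ Finset.Icc 1 (b-1), 1/(a:ℝ)) :=
          mul_le_mul_of_nonneg_left hy (by positivity)
  refine le_trans ?_ (Finset.sum_le_sum key)
  rw [Finset.sum_sub_distrib, gauss]
  refine sub_le_sub_left ?_ _
  calc ∑ b ∈ Finset.Icc 1 n, (2+Real.log n)*((n:ℝ)/b)
      = (2+Real.log n) * ((n:ℝ) * ∑ b ∈ Finset.Icc 1 n, 1/(b:ℝ)) := by
        rw [Finset.mul_sum, Finset.mul_sum]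
        refine Finset.sum_congr rfl fun b _ => by ring
    _ ≤ (2+Real.log n) * ((n:ℝ) * (1+Real.log n)) := by
        have := Hsum_le n n le_rfl
        gcongr
    _ = (2 + Real.log n)*n*(1+Real.log n) := by ring

lemma aux_log_div (k : ℕ) : Tendsto (fun n : ℕ => (Real.log n)^k / (n:ℝ)) atTop (nhds 0) := by
  have h := Real.tendsto_pow_log_div_mul_add_atTop 1 0 k one_ne_zero
  have h2 := h.comp (tendsto_natCast_atTop_atTop (R := ℝ))
  simpa [Function.comp_def] using h2

lemma aux_upper : Tendsto (fun n : ℕ => ((n:ℝ)*((n:ℝ)-1)/2) / ((n:ℝ)^2/2)) atTop (nhds 1) := by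
  have h : Tendsto (fun n : ℕ => 1 - 1/(n:ℝ)) atTop (nhds 1) := by
    have := tendsto_one_div_atTop_nhds_zero_nat (𝕜 := ℝ)
    simpa using tendsto_const_nhds.sub this
  refine h.congr' ?_
  filter_upwards [eventually_ge_atTop 1] with n hn
  have hn0 : (n:ℝ) ≠ 0 := Nat.cast_ne_zero.2 (by omega)
  field_simp

lemma aux_lower : Tendsto (fun n : ℕ =>
    ((n:ℝ)*((n:ℝ)-1)/2 - (2 + Real.log n)*n*(1+Real.log n)) / ((n:ℝ)^2/2)) atTop (nhds 1) := by
  have h0 := tendsto_one_div_atTop_nhds_zero_nat (𝕜 := ℝ)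
  have h1 := aux_log_div 1
  have h2 := aux_log_div 2
  have h : Tendsto (fun n : ℕ => (1 - 1/(n:ℝ))
      - (4*(1/(n:ℝ)) + 6*((Real.log n)^1/(n:ℝ)) + 2*((Real.log n)^2/(n:ℝ)))) atTop
      (nhds ((1 - 0) - (4*0 + 6*0 + 2*0))) := by
    exact (tendsto_const_nhds.sub h0).sub
      (((h0.const_mul 4).add (h1.const_mul 6)).add (h2.const_mul 2))
  norm_num at h
  refine h.congr' ?_
  filter_upwards [eventually_ge_atTop 1] with n hn
  have hn0 : (n:ℝ) ≠ 0 := Nat.cast_ne_zero.2 (by omega)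
  field_simp
  ring


/-- As `n → ∞`, the sum `∑ 1/((r+s)(r+ℓ+s))` over integers `k₁, r, ℓ, s ≥ 1` with
`k₁ + r + ℓ + s ≤ n` is asymptotically equivalent to `n²/2`. -/
theorem sum_inv_rs_rls_asymptotic :
    Tendsto (fun n : ℕ =>
      (∑ p ∈ (Finset.Icc 1 n ×ˢ Finset.Icc 1 n ×ˢ
          Finset.Icc 1 n ×ˢ Finset.Icc 1 n).filter
          (fun p : ℕ × ℕ × ℕ × ℕ => p.1 + p.2.1 + p.2.2.1 + p.2.2.2 ≤ n),
        1 / (((p.2.1 : ℝ) + p.2.2.2) * ((p.2.1 : ℝ) + p.2.2.1 + p.2.2.2)))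
        / ((n : ℝ) ^ 2 / 2))
      atTop (nhds 1) := by
  have hFB : ∀ n : ℕ,
      (∑ p ∈ (Finset.Icc 1 n ×ˢ Finset.Icc 1 n ×ˢ
          Finset.Icc 1 n ×ˢ Finset.Icc 1 n).filter
          (fun p : ℕ × ℕ × ℕ × ℕ => p.1 + p.2.1 + p.2.2.1 + p.2.2.2 ≤ n),
        1 / (((p.2.1 : ℝ) + p.2.2.2) * ((p.2.1 : ℝ) + p.2.2.1 + p.2.2.2)))
      = ∑ b ∈ Finset.Icc 1 n, ((n-b:ℕ):ℝ)/b *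
          (((b-1:ℕ):ℝ) - ∑ a ∈ Finset.Icc 1 (b-1), 1/(a:ℝ)) := by
    intro n
    rw [stage1, stage2]
    refine Finset.sum_congr rfl fun b hb => ?_
    rw [Finset.mem_Icc] at hb
    exact inner_eq n b hb.1 hb.2
  refine tendsto_of_tendsto_of_tendsto_of_le_of_le' aux_lower aux_upper ?_ ?_
  · filter_upwards [eventually_ge_atTop 1] with n hn
    rw [hFB n]
    have hpos : (0:ℝ) < (n:ℝ)^2/2 := by
      have : (0:ℝ) < (n:ℝ) := by exact_mod_cast hn
      positivity
    exact div_le_div_of_nonneg_right (lower_bound n hn) hpos.le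
  · filter_upwards [eventually_ge_atTop 1] with n hn
    rw [hFB n]
    have hpos : (0:ℝ) < (n:ℝ)^2/2 := by
      have : (0:ℝ) < (n:ℝ) := by exact_mod_cast hn
      positivity
    exact div_le_div_of_nonneg_right (upper_bound n) hpos.le
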